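/- Let P_1, ..., P_d be d×d permutation matrices such that Δ(P_j* P_i) = 0 whenever i ≠ j. Then for every pair of indices (i, j) with 1 ≤ i, j ≤ d, there exists exactly one k ∈ {1, ..., d} such that the (i, j) entry of P_k is equal to 1; consequently the matrix L = ∑_{k=1}^d k·P_k is a d×d Latin square (each row and each column of L contains each value in {1, ..., d} exactly once). -/

import Mathlib

open Matrix

/-- The diagonal truncation map Δ: zeros out off-diagonal entries. -/
def delta {n : Type*} [DecidableEq n] (M : Matrix n n ℂ) : Matrix n n ℂ :=
  Matrix.diagonal (fun i => M i i)

theorem stmt2 (d : ℕ) (P : Fin d → Matrix (Fin d) (Fin d) ℂ)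
    (hP : ∀ k, ∃ σ : Equiv.Perm (Fin d), P k = σ.permMatrix ℂ)
    (horth : ∀ (i j : Fin d), i ≠ j → delta ((P j)ᴴ * P i) = 0)
    (L : Matrix (Fin d) (Fin d) ℂ)
    (hL : L = ∑ k : Fin d, ((k : ℕ) + 1 : ℂ) • P k) :
    (∀ i j : Fin d, ∃! k : Fin d, P k i j = 1) ∧
    (∀ (i : Fin d) (v : Fin d), ∃! j : Fin d, L i j = ((v : ℕ) + 1 : ℂ)) ∧
    (∀ (j : Fin d) (v : Fin d), ∃! i : Fin d, L i j = ((v : ℕ) + 1 : ℂ)) := by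
  choose σ hσ using hP
  have hent : ∀ k i j, P k i j = if σ k i = j then 1 else 0 := by
    intro k i j
    rw [hσ k]
    simp [Equiv.Perm.permMatrix, PEquiv.toMatrix_apply, Equiv.toPEquiv_apply]
  have hinj : ∀ j : Fin d, Function.Injective (fun k : Fin d => (σ k)⁻¹ j) := by
    intro j a b hab
    simp only at hab
    by_contra hne
    have h0 := congrFun (congrFun (horth a b hne) j) j
    have h0' : ((P b)ᴴ * P a) j j = 0 := by
      simpa [delta, Matrix.diagonal_apply_eq] using h0
    rw [Matrix.mul_apply] at h0'
    have hterm : ∀ m : Fin d, (P b)ᴴ j m * P a m j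
        = if m = (σ a)⁻¹ j then 1 else 0 := by
      intro m
      rw [Matrix.conjTranspose_apply, hent, hent]
      have h1 : σ a m = j ↔ m = (σ a)⁻¹ j := by
        constructor <;> intro h
        · simp [← h]
        · simp [h, Equiv.Perm.inv_def]
      have h2 : σ b m = j ↔ m = (σ a)⁻¹ j := by
        have hab' : (σ b)⁻¹ j = (σ a)⁻¹ j := hab.symm
        constructor <;> intro h
        · rw [← hab']; simp [← h]
        · rw [← hab'] at h; simp [h, Equiv.Perm.inv_def]
      simp only [h1, h2]
      by_cases hm : m = (σ a)⁻¹ j <;> simp [hm]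
    rw [Finset.sum_congr rfl (fun m _ => hterm m)] at h0'
    simp at h0'
  have hbij : ∀ j : Fin d, Function.Surjective (fun k : Fin d => (σ k)⁻¹ j) :=
    fun j => Finite.surjective_of_injective (hinj j)
  have key : ∀ i j : Fin d, ∃! k : Fin d, σ k i = j := by
    intro i j
    obtain ⟨k, hk⟩ := hbij j i
    simp only at hk
    refine ⟨k, ?_, ?_⟩
    · rw [← hk]; simp [Equiv.Perm.inv_def]
    · intro k' hk'
      apply hinj j
      show (σ k')⁻¹ j = (σ k)⁻¹ j
      rw [hk, ← hk']
      simp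
  have hLval : ∀ (k : Fin d) (i j : Fin d), σ k i = j → L i j = ((k : ℕ) + 1 : ℂ) := by
    intro k i j hk
    rw [hL]
    simp only [Matrix.sum_apply, Matrix.smul_apply, smul_eq_mul]
    rw [Finset.sum_eq_single k]
    · rw [hent, if_pos hk, mul_one]
    · intro k' _ hk'
      rw [hent, if_neg, mul_zero]
      intro h
      exact hk' ((key i j).unique h hk)
    · simp
  have hcast : ∀ a b : Fin d, ((a : ℕ) + 1 : ℂ) = ((b : ℕ) + 1 : ℂ) → a = b := by
    intro a b h
    have : ((a : ℕ) : ℂ) = ((b : ℕ) : ℂ) := by linear_combination h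
    exact Fin.ext (Nat.cast_injective this)
  refine ⟨?_, ?_, ?_⟩
  · intro i j
    obtain ⟨k, hk, hku⟩ := key i j
    refine ⟨k, by show P k i j = 1; rw [hent, if_pos hk], ?_⟩
    intro k' hk'
    apply hku
    rw [hent] at hk'
    by_contra h
    rw [if_neg h] at hk'
    exact zero_ne_one hk'
  · intro i v
    refine ⟨σ v i, hLval v i _ rfl, ?_⟩
    intro j' hj'
    obtain ⟨k, hk, _⟩ := key i j'
    have := hLval k i j' hk
    rw [this] at hj'
    rw [← hk, hcast k v hj']
  · intro j v
    refine ⟨(σ v)⁻¹ j, hLval v _ j (by simp), ?_⟩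
    intro i' hi'
    obtain ⟨k, hk, _⟩ := key i' j
    have := hLval k i' j hk
    rw [this] at hi'
    have hkv := hcast k v hi'
    rw [hkv] at hk
    rw [← hk]
    simp
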